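/- Let m be an integer with m > 1 and let S be the set of prime divisors of m. For a subset T of S write d_T = ∏_{p ∈ T} p. Then for every integer x, Σ_{T ⊆ S} (−1)^{|T|} · gcd(x, m / d_T) equals φ(m) if m divides x, and equals 0 otherwise. -/

import Mathlib

open Finset
local notation "μ" => ArithmeticFunction.moebius

/-- gcd as a sum of totients over divisors that also divide `x`. -/
lemma gcd_eq_sum_totient (x : ℤ) (n : ℕ) (hn : 0 < n) :
    (Int.gcd x (n : ℤ) : ℤ) =
      ∑ d ∈ n.divisors, (if (d : ℤ) ∣ x then (d.totient : ℤ) else 0) := by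
  have hg : Int.gcd x (n : ℤ) = Nat.gcd x.natAbs n := by
    simp [Int.gcd]
  have hdiv : (Nat.gcd x.natAbs n).divisors = n.divisors.filter (· ∣ x.natAbs) := by
    ext d
    simp only [Nat.mem_divisors, Finset.mem_filter, Nat.dvd_gcd_iff]
    constructor
    · rintro ⟨⟨h1, h2⟩, -⟩
      exact ⟨⟨h2, hn.ne'⟩, h1⟩
    · rintro ⟨⟨h2, -⟩, h1⟩
      refine ⟨⟨h1, h2⟩, ?_⟩
      exact fun h => hn.ne' (Nat.eq_zero_of_gcd_eq_zero_right h)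
  have := Nat.sum_totient (Nat.gcd x.natAbs n)
  rw [hdiv] at this
  rw [hg, ← this]
  push_cast [Finset.sum_filter]
  apply Finset.sum_congr rfl
  intro d _
  simp [Int.natCast_dvd]

lemma moebius_prod_primes {T : Finset ℕ} (hT : ∀ p ∈ T, p.Prime) :
    μ (∏ p ∈ T, p) = (-1 : ℤ) ^ T.card := by
  classical
  induction T using Finset.induction with
  | empty => simp
  | insert a s ha ih =>
    have hap : a.Prime := hT a (Finset.mem_insert_self a s)
    have hps : ∀ p ∈ s, p.Prime := fun p hp => hT p (Finset.mem_insert_of_mem hp)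
    have hcop : Nat.Coprime a (∏ p ∈ s, p) := by
      apply Nat.Coprime.prod_right
      intro p hp
      exact (Nat.coprime_primes hap (hps p hp)).mpr (by rintro rfl; exact ha hp)
    rw [Finset.prod_insert ha, ArithmeticFunction.isMultiplicative_moebius.map_mul_of_coprime hcop,
      ArithmeticFunction.moebius_apply_prime hap, ih hps, Finset.card_insert_of_notMem ha]
    ring

/-- For `m > 1` with prime divisor set `S` and any integer `x`,
`∑_{T ⊆ S} (-1)^{|T|} gcd(x, m / d_T)` equals `φ(m)` if `m ∣ x` and `0` otherwise. -/
theorem alternating_sum_gcd_eq_indicator (m : ℕ) (hm : 1 < m) (x : ℤ) :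
    (∑ T ∈ m.primeFactors.powerset,
        (-1 : ℤ) ^ T.card * (Int.gcd x ((m / ∏ p ∈ T, p : ℕ) : ℤ) : ℤ)) =
      if (m : ℤ) ∣ x then (m.totient : ℤ) else 0 := by
  classical
  have hm0 : m ≠ 0 := by omega
  -- Step 1: the powerset sum equals the sum over squarefree divisors with Möbius values
  have step1 : (∑ T ∈ m.primeFactors.powerset,
        (-1 : ℤ) ^ T.card * (Int.gcd x ((m / ∏ p ∈ T, p : ℕ) : ℤ) : ℤ)) =
      ∑ d ∈ m.divisors, (μ d : ℤ) * (Int.gcd x ((m / d : ℕ) : ℤ) : ℤ) := by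
    have hpf : (UniqueFactorizationMonoid.normalizedFactors m).toFinset = m.primeFactors := by
      rw [Nat.factors_eq]
      simp
    rw [← Finset.sum_filter_of_ne (p := fun d => Squarefree d)
      (f := fun d => (μ d : ℤ) * (Int.gcd x ((m / d : ℕ) : ℤ) : ℤ))
      (by intro d _ h
          by_contra hsq
          exact h (by simp [ArithmeticFunction.moebius_eq_zero_of_not_squarefree hsq]))]
    rw [Nat.sum_divisors_filter_squarefree hm0, hpf]
    apply Finset.sum_congr rfl
    intro T hT
    rw [Finset.mem_powerset] at hT
    have hprimes : ∀ p ∈ T, p.Prime := fun p hp => Nat.prime_of_mem_primeFactors (hT hp)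
    rw [Finset.prod_val]
    simp only [Function.id_def]
    rw [moebius_prod_primes hprimes]
  rw [step1]
  -- Step 2: Möbius inversion
  have key : ∀ (n : ℕ), n > 0 → ∑ d ∈ n.divisors,
      (if (d : ℤ) ∣ x then (d.totient : ℤ) else 0) = (Int.gcd x (n : ℤ) : ℤ) :=
    fun n hn => (gcd_eq_sum_totient x n hn).symm
  have inv := (ArithmeticFunction.sum_eq_iff_sum_smul_moebius_eq
    (f := fun d => if (d : ℤ) ∣ x then (d.totient : ℤ) else 0)
    (g := fun n => (Int.gcd x (n : ℤ) : ℤ))).mp key m (by omega)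
  rw [← inv, Nat.sum_divisorsAntidiagonal
    (f := fun a b => (μ a : ℤ) • (Int.gcd x (b : ℤ) : ℤ))]
  simp [zsmul_eq_mul]
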